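/- The lazy symmetric random walk on ℤ which at each step moves +1 with probability p, −1 with probability p, and stays put with probability 1 − 2p (where 0 < p ≤ 1/2) is recurrent; in particular, started from any m ≥ 0, it reaches 0 almost surely. -/

import Mathlib

open MeasureTheory ProbabilityTheory

namespace RSKpaper

/-- Insert a letter into a row (Schensted row insertion); returns the new row
and the bumped letter, if any. -/
def rowInsert (r : List ℕ) (a : ℕ) : List ℕ × Option ℕ :=
  match r.findIdx? (fun b => decide (a < b)) with
  | none => (r ++ [a], none)
  | some i => (r.set i a, r[i]?)

/-- Insert a letter into a tableau (list of rows). -/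
def tabInsert : List (List ℕ) → ℕ → List (List ℕ)
  | [], a => [[a]]
  | r :: rs, a =>
    match rowInsert r a with
    | (r', none) => r' :: rs
    | (r', some b) => r' :: tabInsert rs b

/-- The RSK insertion tableau `P(w)` of a word. -/
def Ptab (w : List ℕ) : List (List ℕ) := w.foldl tabInsert ([] : List (List ℕ))

/-- The shape of the RSK tableaux of a word, as the list of row lengths. -/
def shape (w : List ℕ) : List ℕ := (Ptab w).map List.length

/-- The RSK recording tableau `Q(w)`: the entry `i+1` is placed in the row in
which the shape grows when the `(i+1)`-st letter is inserted. -/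
def Qtab (w : List ℕ) : List (List ℕ) :=
  (List.range w.length).foldl (fun q i =>
    let s1 := shape (w.take i)
    let s2 := shape (w.take (i + 1))
    let j := (List.range s2.length).findIdx
      (fun r => decide (s2.getD r 0 ≠ s1.getD r 0))
    if j < q.length then q.set j (q.getD j ([] : List ℕ) ++ [i + 1]) else q ++ [[i + 1]]) ([] : List (List ℕ))

/-- Iterated bracketing of factors `21` in a two–letter word, 1-based positions:
returns the stack of positions of currently unmatched `2`'s together with the
list of bracketed pairs `(position of 2, position of 1)`. -/
def bracketFold (w : List ℕ) : List ℕ × List (ℕ × ℕ) :=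
  (w.zipIdx.map (fun q => (q.2, q.1))).foldl (fun st p =>
    if p.2 = 2 then ((p.1 + 1) :: st.1, st.2)
    else
      match st.1 with
      | [] => st
      | j :: rest => (rest, (j, p.1 + 1) :: st.2)) ([], [])

/-- The rank `r(w)`: the number of bracketed `21`-pairs. -/
def rank (w : List ℕ) : ℕ := (bracketFold w).2.length

/-- The set of paired (bracketed) 1-based positions of a two-letter word. -/
def pairedPositions (w : List ℕ) : Finset ℕ :=
  ((bracketFold w).2.map (fun p => p.1)).toFinset ∪
    ((bracketFold w).2.map (fun p => p.2)).toFinset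

/-- The set of free (unbracketed) 1-based positions of a two-letter word. -/
def freePositions (w : List ℕ) : Finset ℕ :=
  (Finset.Icc 1 w.length) \ pairedPositions w

/-- The 1-based positions of the free `1`'s of a two-letter word. -/
def freeOnePositions (w : List ℕ) : Finset ℕ :=
  (freePositions w).filter (fun i => w.getD (i - 1) 0 = 1)

/-- The initial segment `[x]_n` of an infinite sequence, as a word. -/
def pre (n : ℕ) (x : ℕ → ℕ) : List ℕ := (List.range n).map x

/-- A two–letter Bernoulli ensemble: coordinates are i.i.d. with
`P(1) = p₁`, `P(2) = p₂`. -/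
def IsBernoulli2 (μ : Measure (ℕ → ℕ)) (p₁ p₂ : ℝ) : Prop :=
  IsProbabilityMeasure μ ∧
    iIndepFun (fun n (x : ℕ → ℕ) => x n) μ ∧
    (∀ n : ℕ, μ {x | x n = 1} = ENNReal.ofReal p₁) ∧
    (∀ n : ℕ, μ {x | x n = 2} = ENNReal.ofReal p₂) ∧
    p₁ + p₂ = 1

/-- A `k`-letter Bernoulli ensemble with letter probabilities `p 1 ≥ … ≥ p k`. -/
def IsBernoulliK (μ : Measure (ℕ → ℕ)) (k : ℕ) (p : ℕ → ℝ) : Prop :=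
  IsProbabilityMeasure μ ∧
    iIndepFun (fun n (x : ℕ → ℕ) => x n) μ ∧
    (∀ n i : ℕ, μ {x | x n = i} = ENNReal.ofReal (p i)) ∧
    (∀ i : ℕ, i < 1 ∨ k < i → p i = 0) ∧
    (∀ i : ℕ, 1 ≤ i → i < k → p (i + 1) ≤ p i) ∧
    0 < p k ∧ (∑ i ∈ Finset.Icc 1 k, p i) = 1


open Filter
open scoped NNReal ENNReal


lemma ivt_int (f : ℕ → ℤ) (hstep : ∀ k, |f (k+1) - f k| ≤ 1) (c : ℤ) :
    ∀ d a, c ≤ f a → f (a + d) ≤ c → ∃ n, a ≤ n ∧ f n = c := by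
  intro d
  induction d with
  | zero => intro a h1 h2; exact ⟨a, le_refl a, le_antisymm (by simpa using h2) h1⟩
  | succ d ih =>
    intro a h1 h2
    by_cases hc : f a = c
    · exact ⟨a, le_rfl, hc⟩
    · have h3 : c ≤ f (a+1) := by
        have := hstep a; rw [abs_le] at this; omega
      have h4 : f (a + 1 + d) ≤ c := by
        have he : a + 1 + d = a + (d+1) := by omega
        rw [he]; exact h2
      obtain ⟨n, hn, hfn⟩ := ih (a+1) h3 h4
      exact ⟨n, by omega, hfn⟩

lemma abs_sum_le (ξ : ℕ → ℤ) (h : ∀ i, |ξ i| ≤ 1) (n : ℕ) :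
    |∑ i ∈ Finset.range n, ξ i| ≤ (n : ℤ) := by
  induction n with
  | zero => simp
  | succ n ih =>
    rw [Finset.sum_range_succ]
    calc |∑ i ∈ Finset.range n, ξ i + ξ n| ≤ |∑ i ∈ Finset.range n, ξ i| + |ξ n| := abs_add_le _ _
    _ ≤ (n : ℤ) + 1 := add_le_add ih (h n)
    _ = ((n+1 : ℕ) : ℤ) := by push_cast; ring

lemma det_main (ξ : ℕ → ℤ) (hb : ∀ i, |ξ i| ≤ 1)
    (hup : ∀ M : ℤ, ∃ n, M < ∑ i ∈ Finset.range n, ξ i)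
    (hdown : ∀ M : ℤ, ∃ n, ∑ i ∈ Finset.range n, ξ i < M) :
    (∀ N : ℕ, ∃ n, N ≤ n ∧ 1 ≤ n ∧ (∑ i ∈ Finset.range n, ξ i) = 0) ∧
    ∀ m : ℤ, 0 ≤ m → ∃ n : ℕ, m + ∑ i ∈ Finset.range n, ξ i = 0 := by
  set S : ℕ → ℤ := fun n => ∑ i ∈ Finset.range n, ξ i with hS
  have hconv : ∀ n, (∑ i ∈ Finset.range n, ξ i) = S n := fun _ => rfl
  have hstep : ∀ k, |S (k+1) - S k| ≤ 1 := by
    intro k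
    have : S (k+1) - S k = ξ k := by simp [hS, Finset.sum_range_succ]
    rw [this]; exact hb k
  have hstep' : ∀ k, |(-S ·) (k+1) - (-S ·) k| ≤ 1 := by
    intro k
    have : (-S ·) (k+1) - (-S ·) k = -(S (k+1) - S k) := by simp; ring
    rw [this, abs_neg]; exact hstep k
  constructor
  · intro N
    set N' : ℕ := max N 1 with hN'
    by_cases hpos : 0 ≤ S N'
    · obtain ⟨b, hbb⟩ := hdown (-(N' : ℤ))
      rw [hconv] at hbb
      have hbig : N' ≤ b := by
        have h1 : |S b| ≤ (b : ℤ) := abs_sum_le ξ hb b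
        have h2 : (N' : ℤ) < -S b := by omega
        exact_mod_cast le_of_lt (lt_of_lt_of_le h2 (le_trans (neg_le_abs _) h1))
      obtain ⟨n, hn, hfn⟩ := ivt_int S hstep 0 (b - N') N' hpos
        (by rw [Nat.add_sub_cancel' hbig]; omega)
      exact ⟨n, le_trans (le_max_left _ _) hn, le_trans (le_max_right _ _) hn, hfn⟩
    · obtain ⟨b, hbb⟩ := hup ((N' : ℤ))
      rw [hconv] at hbb
      have hbig : N' ≤ b := by
        have h1 : |S b| ≤ (b : ℤ) := abs_sum_le ξ hb b
        exact_mod_cast le_of_lt (lt_of_lt_of_le hbb (le_trans (le_abs_self _) h1))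
      obtain ⟨n, hn, hfn⟩ := ivt_int (-S ·) hstep' 0 (b - N') N'
        (by simp; omega) (by rw [Nat.add_sub_cancel' hbig]; simp; omega)
      refine ⟨n, le_trans (le_max_left _ _) hn, le_trans (le_max_right _ _) hn, ?_⟩
      simpa using hfn
  · intro m hm
    obtain ⟨b, hbb⟩ := hdown (-m)
    rw [hconv] at hbb
    obtain ⟨n, _, hfn⟩ := ivt_int S hstep (-m) b 0 (by simp [hS]; omega) (by simp; omega)
    exact ⟨n, by rw [hconv]; omega⟩

/-- the lazy symmetric random walk on `ℤ` with step distribution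
`+1, -1, 0` with probabilities `p, p, 1 - 2p` (`0 < p ≤ 1/2`) is recurrent, and
started from any `m ≥ 0` it reaches `0` almost surely. -/
theorem lazy_symmetric_walk_recurrent {Ω : Type*} [MeasurableSpace Ω]
    (μ : Measure Ω) [IsProbabilityMeasure μ] (p : ℝ) (hp : 0 < p)
    (hp2 : p ≤ 1 / 2) (ξ : ℕ → Ω → ℤ) (hmeas : ∀ n, Measurable (ξ n))
    (hindep : iIndepFun ξ μ)
    (h1 : ∀ n, μ {ω | ξ n ω = 1} = ENNReal.ofReal p)
    (hm1 : ∀ n, μ {ω | ξ n ω = -1} = ENNReal.ofReal p)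
    (h0 : ∀ n, μ {ω | ξ n ω = 0} = ENNReal.ofReal (1 - 2 * p)) :
    (∀ᵐ ω ∂μ, ∀ N : ℕ, ∃ n, N ≤ n ∧ 1 ≤ n ∧
        (∑ i ∈ Finset.range n, ξ i ω) = 0) ∧
    (∀ m : ℤ, 0 ≤ m →
      ∀ᵐ ω ∂μ, ∃ n : ℕ, m + ∑ i ∈ Finset.range n, ξ i ω = 0) := by
  classical
  have hcast : Measurable (fun z : ℤ => (z : ℝ)) := measurable_from_top
  set g : ℕ → Ω → ℝ := fun n ω => ((ξ n ω : ℤ) : ℝ) with hg_def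
  have hgmeas : ∀ n, Measurable (g n) := fun n => hcast.comp (hmeas n)
  have hgsm : ∀ n, StronglyMeasurable (g n) := fun n => (hgmeas n).stronglyMeasurable
  have hgindep : iIndepFun g μ :=
    hindep.comp (fun _ => (fun z : ℤ => (z : ℝ))) (fun _ => hcast)
  -- the three-valued support
  have hone : (0:ℝ) ≤ 1 - 2 * p := by linarith
  have hAm : ∀ n, MeasurableSet {ω | ξ n ω = 1} := fun n =>
    (hmeas n) (measurableSet_singleton 1)
  have hBm : ∀ n, MeasurableSet {ω | ξ n ω = -1} := fun n =>
    (hmeas n) (measurableSet_singleton (-1))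
  have hCm : ∀ n, MeasurableSet {ω | ξ n ω = 0} := fun n =>
    (hmeas n) (measurableSet_singleton 0)
  have hunion : ∀ n, μ ({ω | ξ n ω = 1} ∪ {ω | ξ n ω = -1} ∪ {ω | ξ n ω = 0}) = 1 := by
    intro n
    have d1 : Disjoint {ω | ξ n ω = 1} {ω | ξ n ω = -1} := by
      rw [Set.disjoint_left]; intro ω hω1 hω2; simp at hω1 hω2; omega
    have d2 : Disjoint ({ω | ξ n ω = 1} ∪ {ω | ξ n ω = -1}) {ω | ξ n ω = 0} := by
      rw [Set.disjoint_left]; intro ω hω1 hω2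
      simp at hω1 hω2; omega
    rw [measure_union d2 (hCm n), measure_union d1 (hBm n), h1 n, hm1 n, h0 n,
      ← ENNReal.ofReal_add hp.le hp.le, ← ENNReal.ofReal_add (by linarith) hone,
      ← ENNReal.ofReal_one]
    congr 1
    ring
  have hbadn : ∀ n, μ {ω | ¬ |ξ n ω| ≤ 1} = 0 := by
    intro n
    have hsub : {ω | ¬ |ξ n ω| ≤ 1} ⊆
        ({ω | ξ n ω = 1} ∪ {ω | ξ n ω = -1} ∪ {ω | ξ n ω = 0})ᶜ := by
      intro ω hω
      simp only [Set.mem_compl_iff, Set.mem_union, Set.mem_setOf_eq] at *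
      rintro ((h | h) | h) <;> exact hω (by rw [h]; decide)
    refine measure_mono_null hsub ?_
    rw [measure_compl (((hAm n).union (hBm n)).union (hCm n)) (measure_ne_top μ _), hunion n,
      measure_univ, tsub_self]
  have hbound : ∀ᵐ ω ∂μ, ∀ n, |ξ n ω| ≤ 1 := by
    rw [ae_all_iff]
    intro n
    rw [ae_iff]
    exact hbadn n
  -- not eventually zero
  have hnotzero : ∀ᵐ ω ∂μ, ∀ N : ℕ, ∃ k, N ≤ k ∧ ξ k ω ≠ 0 := by
    rw [ae_all_iff]
    intro N
    rw [ae_iff]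
    have hsub : ∀ j : ℕ, {ω | ¬∃ k, N ≤ k ∧ ξ k ω ≠ 0} ⊆
        ⋂ i ∈ Finset.Icc N (N + j), ξ i ⁻¹' ({0} : Set ℤ) := by
      intro j ω hω
      simp only [Set.mem_setOf_eq, not_exists, not_and, not_not] at hω
      simp only [Set.mem_iInter, Set.mem_preimage, Set.mem_singleton_iff, Finset.mem_Icc]
      exact fun i hi => hω i hi.1
    have hle : ∀ j : ℕ, μ {ω | ¬∃ k, N ≤ k ∧ ξ k ω ≠ 0} ≤
        ENNReal.ofReal (1 - 2 * p) ^ (j + 1) := by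
      intro j
      refine le_trans (measure_mono (hsub j)) ?_
      rw [hindep.measure_inter_preimage_eq_mul (Finset.Icc N (N + j))
        (fun _ _ => measurableSet_singleton 0)]
      have : ∀ i ∈ Finset.Icc N (N + j), μ (ξ i ⁻¹' ({0} : Set ℤ)) =
          ENNReal.ofReal (1 - 2 * p) := fun i _ => h0 i
      rw [Finset.prod_congr rfl this, Finset.prod_const, Nat.card_Icc,
        show N + j + 1 - N = j + 1 from by omega]
    have htend : Tendsto (fun j : ℕ => ENNReal.ofReal (1 - 2 * p) ^ (j + 1)) atTop (nhds 0) := by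
      have hr : ENNReal.ofReal (1 - 2 * p) < 1 := by
        rw [← ENNReal.ofReal_one]
        exact ENNReal.ofReal_lt_ofReal_iff_of_nonneg hone |>.2 (by linarith)
      exact (ENNReal.tendsto_pow_atTop_nhds_zero_of_lt_one hr).comp (tendsto_add_atTop_nat 1)
    have := ge_of_tendsto' htend (fun j => hle j)
    exact le_antisymm this (by simp)
  -- integrability and mean zero
  have hae : ∀ n, g n =ᵐ[μ] fun ω =>
      Set.indicator {ω | ξ n ω = 1} (fun _ => (1:ℝ)) ω -
        Set.indicator {ω | ξ n ω = -1} (fun _ => (1:ℝ)) ω := by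
    intro n
    filter_upwards [hbound] with ω hω
    have h3 : ξ n ω = -1 ∨ ξ n ω = 0 ∨ ξ n ω = 1 := by
      have := hω n; rw [abs_le] at this; omega
    rcases h3 with h | h | h <;> simp [hg_def, Set.indicator_apply, h]
  have hgint : ∀ n, Integrable (g n) μ := by
    intro n
    refine Integrable.congr (Integrable.sub ?_ ?_) (hae n).symm
    · exact (integrable_const (1:ℝ)).indicator (hAm n)
    · exact (integrable_const (1:ℝ)).indicator (hBm n)
  have hgmean : ∀ n, ∫ ω, g n ω ∂μ = 0 := by
    intro n
    rw [integral_congr_ae (hae n), integral_sub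
      ((integrable_const (1:ℝ)).indicator (hAm n))
      ((integrable_const (1:ℝ)).indicator (hBm n)),
      integral_indicator_const _ (hAm n), integral_indicator_const _ (hBm n),
      measureReal_def, measureReal_def, h1 n, hm1 n]
    simp
  -- the martingale
  set F := Filtration.natural g hgsm with hF
  set h : ℕ → Ω → ℝ := fun n ω => ∑ i ∈ Finset.range (n+1), g i ω with hh
  have hsum : ∀ n, h n = ∑ i ∈ Finset.range (n+1), g i := by
    intro n; funext ω; rw [Finset.sum_apply]
  have hadp : StronglyAdapted F h := by
    intro n
    rw [hsum n]
    refine Finset.stronglyMeasurable_sum _ (fun i hi => ?_)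
    have : i ≤ n := by simp at hi; omega
    exact ((Filtration.stronglyAdapted_natural hgsm) i).mono (F.mono this)
  have hint : ∀ n, Integrable (h n) μ := by
    intro n
    rw [hsum n]
    exact integrable_finset_sum' _ (fun i _ => hgint i)
  have hmart : Martingale h F μ := by
    refine martingale_nat hadp hint (fun n => ?_)
    have h1eq : h (n+1) = h n + g (n+1) := by
      funext ω; simp [hh, Finset.sum_range_succ]
    have e1 : μ[h (n+1)|F n] =ᵐ[μ] μ[h n|F n] + μ[g (n+1)|F n] := by
      rw [h1eq]; exact condExp_add (hint n) (hgint (n+1)) _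
    have e2 : μ[h n|F n] = h n :=
      condExp_of_stronglyMeasurable (F.le n) (hadp n) (hint n)
    have e3 : μ[g (n+1)|F n] =ᵐ[μ] fun _ => μ[g (n+1)] :=
      hgindep.condExp_natural_ae_eq_of_lt hgsm (Nat.lt_succ_self n)
    have e4 : (fun _ : Ω => μ[g (n+1)]) = fun _ : Ω => (0:ℝ) := by
      funext _; exact hgmean (n+1)
    refine EventuallyEq.symm (e1.trans ?_)
    rw [e4] at e3
    rw [e2]
    filter_upwards [e3] with ω hω3
    simp only [Pi.add_apply, hω3, add_zero]
  have hbdd : ∀ᵐ ω ∂μ, ∀ i, |h (i + 1) ω - h i ω| ≤ ((1 : ℝ≥0) : ℝ) := by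
    filter_upwards [hbound] with ω hω i
    have : h (i+1) ω - h i ω = g (i+1) ω := by
      simp [hh, Finset.sum_range_succ]
    rw [this]
    have := hω (i+1)
    simp only [hg_def, NNReal.coe_one]
    rw [← Int.cast_abs]
    exact_mod_cast this
  have hiff1 := hmart.bddAbove_range_iff_bddBelow_range hbdd
  have hiff2 := hmart.submartingale.bddAbove_iff_exists_tendsto hbdd
  -- combine
  have key : ∀ᵐ ω ∂μ, (∀ i, |ξ i ω| ≤ 1) ∧
      (∀ M : ℤ, ∃ n, M < ∑ i ∈ Finset.range n, ξ i ω) ∧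
      (∀ M : ℤ, ∃ n, ∑ i ∈ Finset.range n, ξ i ω < M) := by
    filter_upwards [hbound, hnotzero, hiff1, hiff2] with ω hbω hzω h1ω h2ω
    refine ⟨hbω, ?_⟩
    have hcastsum : ∀ n, h n ω = ((∑ i ∈ Finset.range (n+1), ξ i ω : ℤ) : ℝ) := by
      intro n; simp [hh, hg_def]
    have hnba : ¬ BddAbove (Set.range fun n => h n ω) := by
      intro hba
      obtain ⟨c, hc⟩ := h2ω.mp hba
      rw [Metric.tendsto_atTop] at hc
      obtain ⟨N, hN⟩ := hc (1/2) (by norm_num)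
      obtain ⟨k, hk, hkne⟩ := hzω (N + 1)
      have hd1 : dist (h k ω) c < 1/2 := hN _ (by omega)
      have hd2 : dist (h (k-1) ω) c < 1/2 := hN _ (by omega)
      have hdiff : |h k ω - h (k-1) ω| < 1 := by
        rw [Real.dist_eq] at hd1 hd2
        calc |h k ω - h (k-1) ω| ≤ |h k ω - c| + |c - h (k-1) ω| := abs_sub_le _ _ _
        _ = |h k ω - c| + |h (k-1) ω - c| := by rw [abs_sub_comm c]
        _ < 1 := by linarith
      have hk1 : k = (k - 1) + 1 := by omega
      have heq : h k ω - h (k-1) ω = g k ω := by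
        rw [hk1]; simp [hh, Finset.sum_range_succ]
      rw [heq] at hdiff
      have hz : |ξ k ω| < 1 := by
        have : |(ξ k ω : ℝ)| < 1 := hdiff
        exact_mod_cast this
      rw [abs_lt] at hz
      exact hkne (by omega)
    have hnbb : ¬ BddBelow (Set.range fun n => h n ω) := fun hbb => hnba (h1ω.mpr hbb)
    constructor
    · intro M
      rw [not_bddAbove_iff] at hnba
      obtain ⟨y, ⟨n, rfl⟩, hy⟩ := hnba (M : ℝ)
      refine ⟨n+1, ?_⟩
      have hy' : (M : ℝ) < h n ω := hy
      rw [hcastsum n] at hy'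
      exact_mod_cast hy'
    · intro M
      rw [not_bddBelow_iff] at hnbb
      obtain ⟨y, ⟨n, rfl⟩, hy⟩ := hnbb (M : ℝ)
      refine ⟨n+1, ?_⟩
      have hy' : h n ω < (M : ℝ) := hy
      rw [hcastsum n] at hy'
      exact_mod_cast hy'
  constructor
  · filter_upwards [key] with ω hω
    exact (det_main (fun i => ξ i ω) hω.1 hω.2.1 hω.2.2).1
  · intro m hm
    filter_upwards [key] with ω hω
    exact (det_main (fun i => ξ i ω) hω.1 hω.2.1 hω.2.2).2 m hm

end RSKpaper
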